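/- The Promislow group P = ⟨x, y | x⁻¹y²x = y⁻², y⁻¹x²y = x⁻²⟩ is not left orderable. -/

import Mathlib

/-- The relators `x⁻¹y²xy²` and `y⁻¹x²yx²` of the Promislow group
`P = ⟨x, y ∣ x⁻¹y²x = y⁻², y⁻¹x²y = x⁻²⟩`. -/
def promislowRels : Set (FreeGroup (Fin 2)) :=
  {(FreeGroup.of 0)⁻¹ * (FreeGroup.of 1) ^ 2 * FreeGroup.of 0 * (FreeGroup.of 1) ^ 2,
   (FreeGroup.of 1)⁻¹ * (FreeGroup.of 0) ^ 2 * FreeGroup.of 1 * (FreeGroup.of 0) ^ 2}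

/-- The Promislow group. -/
abbrev Promislow : Type := PresentedGroup promislowRels

/-- The generator `x` of the Promislow group. -/
def px : Promislow := PresentedGroup.of 0

/-- The generator `y` of the Promislow group. -/
def py : Promislow := PresentedGroup.of 1

/- Auxiliary lemmas -/

lemma prom_rel_flip_conj {G : Type*} [Group G] {x y : G}
    (h : x⁻¹ * y ^ 2 * x * y ^ 2 = 1) : (x⁻¹)⁻¹ * y ^ 2 * x⁻¹ * y ^ 2 = 1 := by
  have e : (x⁻¹)⁻¹ * y ^ 2 * x⁻¹ * y ^ 2
      = (y ^ 2)⁻¹ * x * (x⁻¹ * y ^ 2 * x * y ^ 2) * x⁻¹ * y ^ 2 := by group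
  rw [e, h]; group

lemma prom_rel_flip_sq {G : Type*} [Group G] {x y : G}
    (h : x⁻¹ * y ^ 2 * x * y ^ 2 = 1) : x⁻¹ * (y⁻¹) ^ 2 * x * (y⁻¹) ^ 2 = 1 := by
  have e : x⁻¹ * (y⁻¹) ^ 2 * x * (y⁻¹) ^ 2
      = y ^ 2 * (x⁻¹ * y ^ 2 * x * y ^ 2)⁻¹ * (y ^ 2)⁻¹ := by group
  rw [e, h]; group

lemma prom_key {G : Type*} [Group G] (x y : G)
    (h1 : x⁻¹ * y ^ 2 * x * y ^ 2 = 1) (h2 : y⁻¹ * x ^ 2 * y * x ^ 2 = 1) :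
    x * (x * y * x * y * y * x * y) = 1 := by
  have e1 : x⁻¹ * y ^ 2 * x = (y ^ 2)⁻¹ := mul_eq_one_iff_eq_inv.mp h1
  have e2 : x ^ 2 * y = y * (x ^ 2)⁻¹ := by
    have h : y⁻¹ * x ^ 2 * y = (x ^ 2)⁻¹ := mul_eq_one_iff_eq_inv.mp h2
    calc x ^ 2 * y = y * (y⁻¹ * x ^ 2 * y) := by group
      _ = y * (x ^ 2)⁻¹ := by rw [h]
  calc x * (x * y * x * y * y * x * y)
      = (x ^ 2 * y) * (x * y ^ 2 * x * y) := by simp [pow_two, mul_assoc]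
    _ = (y * (x ^ 2)⁻¹) * (x * y ^ 2 * x * y) := by rw [e2]
    _ = y * (x⁻¹ * y ^ 2 * x) * y := by group
    _ = y * (y ^ 2)⁻¹ * y := by rw [e1]
    _ = 1 := by group

/-- homomorphism to quaternion group -/
def promToQ8 : Promislow →* QuaternionGroup 2 :=
  PresentedGroup.toGroup (f := fun i : Fin 2 =>
    if i = 0 then QuaternionGroup.a 1 else QuaternionGroup.xa 0) (by
      intro r hr
      simp only [promislowRels, Set.mem_insert_iff, Set.mem_singleton_iff] at hr
      rcases hr with rfl | rfl <;>
        simp only [map_mul, map_inv, map_pow, FreeGroup.lift_apply_of] <;> decide)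

lemma promToQ8_px : promToQ8 px = QuaternionGroup.a 1 := by
  simp [promToQ8, px, PresentedGroup.toGroup.of]

lemma px_ne_one : px ≠ 1 := by
  intro h
  have : promToQ8 px = 1 := by rw [h, map_one]
  rw [promToQ8_px] at this
  exact absurd this (by decide)

lemma prom_rel1 : px⁻¹ * py ^ 2 * px * py ^ 2 = 1 := by
  have m : ((FreeGroup.of 0)⁻¹ * (FreeGroup.of 1) ^ 2 * FreeGroup.of 0 * (FreeGroup.of 1) ^ 2 :
      FreeGroup (Fin 2)) ∈ Subgroup.normalClosure promislowRels :=
    Subgroup.subset_normalClosure (Or.inl rfl)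
  have h1 : (PresentedGroup.mk promislowRels)
      ((FreeGroup.of 0)⁻¹ * (FreeGroup.of 1) ^ 2 * FreeGroup.of 0 * (FreeGroup.of 1) ^ 2) = 1 :=
    (QuotientGroup.eq_one_iff _).mpr m
  simpa [map_mul, map_inv, map_pow, px, py, PresentedGroup.of] using h1

lemma prom_rel2 : py⁻¹ * px ^ 2 * py * px ^ 2 = 1 := by
  have m : ((FreeGroup.of 1)⁻¹ * (FreeGroup.of 0) ^ 2 * FreeGroup.of 1 * (FreeGroup.of 0) ^ 2 :
      FreeGroup (Fin 2)) ∈ Subgroup.normalClosure promislowRels :=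
    Subgroup.subset_normalClosure (Or.inr rfl)
  have h1 : (PresentedGroup.mk promislowRels)
      ((FreeGroup.of 1)⁻¹ * (FreeGroup.of 0) ^ 2 * FreeGroup.of 1 * (FreeGroup.of 0) ^ 2) = 1 :=
    (QuotientGroup.eq_one_iff _).mpr m
  simpa [map_mul, map_inv, map_pow, px, py, PresentedGroup.of] using h1

/-- The Promislow group is not left orderable: it admits no linear order
invariant under left multiplication. -/
theorem promislow_not_left_orderable :
    ¬ ∃ le : Promislow → Promislow → Prop,
        IsLinearOrder Promislow le ∧ ∀ a b c : Promislow, le a b → le (c * a) (c * b) := by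
  rintro ⟨le, hlin, hmul⟩
  have htrans : ∀ {a b c}, le a b → le b c → le a c :=
    fun hab hbc => hlin.toIsPartialOrder.toIsPreorder.toIsTrans.trans _ _ _ hab hbc
  have hanti : ∀ {a b}, le a b → le b a → a = b :=
    fun hab hba => hlin.toIsPartialOrder.toAntisymm.antisymm _ _ hab hba
  have htot : ∀ a b, le a b ∨ le b a := hlin.toTotal.total
  -- positivity closed under multiplication
  have pos_mul : ∀ {a b : Promislow}, le 1 a → le 1 b → le 1 (a * b) := by
    intro a b ha hb
    have := hmul 1 b a hb
    rw [mul_one] at this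
    exact htrans ha this
  -- if a ≥ 1, b ≥ 1 and a * b = 1, then a = 1
  have cancel : ∀ {a b : Promislow}, le 1 a → le 1 b → a * b = 1 → a = 1 := by
    intro a b ha hb hab
    have h := hmul 1 b a hb
    rw [mul_one, hab] at h
    exact hanti h ha
  -- from a ≤ 1 deduce 1 ≤ a⁻¹
  have inv_pos : ∀ {a : Promislow}, le a 1 → le 1 a⁻¹ := by
    intro a ha
    have := hmul a 1 a⁻¹ ha
    rwa [inv_mul_cancel, mul_one] at this
  have h1 := prom_rel1
  have h2 := prom_rel2
  -- in each sign case, obtain a pair (x', y') with both ≥ 1 satisfying the relations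
  have main : ∀ (x y : Promislow), le 1 x → le 1 y →
      (x⁻¹ * y ^ 2 * x * y ^ 2 = 1) → (y⁻¹ * x ^ 2 * y * x ^ 2 = 1) → x = 1 := by
    intro x y hx hy hr1 hr2
    have hw := prom_key x y hr1 hr2
    have htail : le 1 (x * y * x * y * y * x * y) :=
      pos_mul (pos_mul (pos_mul (pos_mul (pos_mul (pos_mul hx hy) hx) hy) hy) hx) hy
    exact cancel hx htail hw
  have hx1 : px = 1 := by
    rcases htot 1 px with hx | hx <;> rcases htot 1 py with hy | hy
    · exact main px py hx hy h1 h2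
    · have := main px py⁻¹ hx (inv_pos hy) (prom_rel_flip_sq h1) (prom_rel_flip_conj h2)
      exact this
    · have := main px⁻¹ py (inv_pos hx) hy (prom_rel_flip_conj h1) (prom_rel_flip_sq h2)
      rw [← inv_inv px, this, inv_one]
    · have := main px⁻¹ py⁻¹ (inv_pos hx) (inv_pos hy)
        (prom_rel_flip_sq (prom_rel_flip_conj h1)) (prom_rel_flip_conj (prom_rel_flip_sq h2))
      rw [← inv_inv px, this, inv_one]
  exact px_ne_one hx1
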